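/- Let K be a field of characteristic zero, p ≥ 1 an integer, and let C, A, F be n×n matrices over the formal power series ring K[[λ]] such that: (d/dλ)A = A·C, the constant term of A is the identity matrix, and (d/dλ)F + C·F = p·λ^{p−1}·F·C_σ, where C_σ denotes the matrix obtained from C by substituting λ ↦ λ^p in every entry. Then F = A⁻¹·F₀·A_σ, where F₀ is the constant-term matrix of F and A_σ is obtained from A by substituting λ ↦ λ^p in every entry. -/

import Mathlib

open PowerSeries

/-- The substitution `λ ↦ λ^p` on `K⟦λ⟧`: the ring homomorphism sending
`λ` to `λ^p`, described on coefficients. -/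
noncomputable def substPow {K : Type*} [CommRing K] (p : ℕ) (f : K⟦X⟧) : K⟦X⟧ :=
  PowerSeries.mk fun k => if p ∣ k then coeff (k / p) f else 0

section Helpers

variable {K : Type*} [CommRing K]

lemma coeff_substPow (p k : ℕ) (f : K⟦X⟧) :
    coeff k (substPow p f) = if p ∣ k then coeff (k / p) f else 0 :=
  coeff_mk _ _

lemma coeff_substPow_mul (p m : ℕ) (hp : 1 ≤ p) (f : K⟦X⟧) :
    coeff (p * m) (substPow p f) = coeff m f := by
  rw [coeff_substPow, if_pos ⟨m, rfl⟩, Nat.mul_div_cancel_left m hp]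

lemma substPow_add (p : ℕ) (f g : K⟦X⟧) :
    substPow p (f + g) = substPow p f + substPow p g := by
  ext k
  simp only [coeff_substPow, map_add]
  split_ifs <;> simp

lemma substPow_zero (p : ℕ) : substPow p (0 : K⟦X⟧) = 0 := by
  ext k; simp [coeff_substPow]

lemma substPow_sum {ι : Type*} (p : ℕ) (s : Finset ι) (f : ι → K⟦X⟧) :
    substPow p (∑ i ∈ s, f i) = ∑ i ∈ s, substPow p (f i) := by
  classical
  induction s using Finset.cons_induction with
  | empty => simp [substPow_zero]
  | cons a s ha ih => rw [Finset.sum_cons, Finset.sum_cons, substPow_add, ih]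

lemma substPow_mul (p : ℕ) (hp : 1 ≤ p) (f g : K⟦X⟧) :
    substPow p (f * g) = substPow p f * substPow p g := by
  ext k
  rw [coeff_substPow]
  conv_rhs => rw [PowerSeries.coeff_mul]
  by_cases hk : p ∣ k
  · obtain ⟨m, rfl⟩ := hk
    rw [if_pos ⟨m, rfl⟩, Nat.mul_div_cancel_left m hp, PowerSeries.coeff_mul]
    have hinj : Set.InjOn (fun y : ℕ × ℕ => (p * y.1, p * y.2))
        (Finset.HasAntidiagonal.antidiagonal m) := by
      intro x _ y _ h
      simp only [Prod.mk.injEq] at h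
      ext
      · exact Nat.eq_of_mul_eq_mul_left hp h.1
      · exact Nat.eq_of_mul_eq_mul_left hp h.2
    have hsub : (Finset.HasAntidiagonal.antidiagonal m).image (fun y : ℕ × ℕ => (p * y.1, p * y.2))
        ⊆ Finset.HasAntidiagonal.antidiagonal (p * m) := by
      intro x hx
      simp only [Finset.mem_image] at hx
      obtain ⟨y, hy, rfl⟩ := hx
      rw [Finset.HasAntidiagonal.mem_antidiagonal] at hy ⊢
      rw [← Nat.mul_add, hy]
    rw [← Finset.sum_subset hsub, Finset.sum_image (fun x hx y hy h => hinj hx hy h)]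
    · refine Finset.sum_congr rfl fun y _ => ?_
      rw [coeff_substPow_mul _ _ hp, coeff_substPow_mul _ _ hp]
    · intro x hx hximg
      obtain ⟨x1, x2⟩ := x
      rw [Finset.HasAntidiagonal.mem_antidiagonal] at hx
      by_cases h1 : p ∣ x1
      · by_cases h2 : p ∣ x2
        · exfalso
          apply hximg
          obtain ⟨a, rfl⟩ := h1
          obtain ⟨b, rfl⟩ := h2
          simp only [Finset.mem_image]
          refine ⟨(a, b), ?_, rfl⟩
          rw [Finset.HasAntidiagonal.mem_antidiagonal]
          rw [← Nat.mul_add] at hx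
          exact Nat.eq_of_mul_eq_mul_left hp hx
        · rw [coeff_substPow, coeff_substPow, if_neg h2, mul_zero]
      · rw [coeff_substPow, if_neg h1, zero_mul]
  · rw [if_neg hk]
    symm
    apply Finset.sum_eq_zero
    intro x hx
    obtain ⟨x1, x2⟩ := x
    rw [Finset.HasAntidiagonal.mem_antidiagonal] at hx
    by_cases h1 : p ∣ x1
    · have h2 : ¬ p ∣ x2 := fun h => hk (hx ▸ Nat.dvd_add h1 h)
      rw [coeff_substPow, coeff_substPow, if_neg h2, mul_zero]
    · rw [coeff_substPow, if_neg h1, zero_mul]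

lemma constantCoeff_substPow (p : ℕ) (f : K⟦X⟧) :
    constantCoeff (substPow p f) = constantCoeff f := by
  have := coeff_substPow p 0 f
  rw [if_pos (dvd_zero p), Nat.zero_div] at this
  simpa [coeff_zero_eq_constantCoeff] using this

lemma natCast_eq_C (p : ℕ) : ((p : ℕ) : K⟦X⟧) = C (p : K) := by
  simp

lemma derivative_substPow (p : ℕ) (hp : 1 ≤ p) (f : K⟦X⟧) :
    d⁄dX K (substPow p f) = (p : K⟦X⟧) * X ^ (p - 1) * substPow p (d⁄dX K f) := by
  ext k
  rw [coeff_derivative, coeff_substPow, mul_assoc, natCast_eq_C, coeff_C_mul,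
    coeff_X_pow_mul']
  by_cases h : p ∣ k + 1
  · obtain ⟨m, hm⟩ := h
    have hm1 : 1 ≤ m := by
      rcases Nat.eq_zero_or_pos m with h0 | h1
      · subst h0; simp at hm
      · exact h1
    obtain ⟨m', rfl⟩ : ∃ m', m = m' + 1 := ⟨m - 1, by omega⟩
    rw [if_pos ⟨m' + 1, hm⟩]
    have hq : p * (m' + 1) = p * m' + p := by ring
    have hle : p - 1 ≤ k := by
      have h1 := hm; rw [hq] at h1; omega
    rw [if_pos hle]
    have h2 : k - (p - 1) = p * m' := by
      have h1 := hm; rw [hq] at h1; omega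
    rw [h2, coeff_substPow_mul _ _ hp, coeff_derivative]
    have h3 : (k + 1) / p = m' + 1 := by
      rw [hm, Nat.mul_div_cancel_left _ hp]
    rw [h3]
    have h4 : ((k : K) + 1) = (p : K) * ((m' : K) + 1) := by
      have h5 : ((k + 1 : ℕ) : K) = ((p * (m' + 1) : ℕ) : K) := by rw [hm]
      push_cast at h5
      exact h5
    rw [h4]; ring
  · rw [if_neg h]
    symm
    split_ifs with hle
    · have hnd : ¬ p ∣ k - (p - 1) := by
        intro hdvd
        obtain ⟨m, hm⟩ := hdvd
        exact h ⟨m + 1, by rw [Nat.mul_add, ← hm]; omega⟩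
      rw [coeff_substPow, if_neg hnd, mul_zero, zero_mul]
    · rw [mul_zero, zero_mul]

lemma matrix_map_derivative_mul {n : ℕ} (M N : Matrix (Fin n) (Fin n) K⟦X⟧) :
    (M * N).map (fun g => d⁄dX K g)
      = M.map (fun g => d⁄dX K g) * N + M * N.map (fun g => d⁄dX K g) := by
  refine Matrix.ext fun i j => ?_
  simp only [Matrix.map_apply, Matrix.mul_apply, Matrix.add_apply]
  rw [map_sum (d⁄dX K) (fun l => M i l * N l j) Finset.univ, ← Finset.sum_add_distrib]
  refine Finset.sum_congr rfl fun l _ => ?_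
  rw [Derivation.leibniz, smul_eq_mul, smul_eq_mul]; ring

lemma matrix_map_substPow_mul (p : ℕ) (hp : 1 ≤ p) {n : ℕ}
    (M N : Matrix (Fin n) (Fin n) K⟦X⟧) :
    (M * N).map (substPow p) = M.map (substPow p) * N.map (substPow p) := by
  refine Matrix.ext fun i j => ?_
  simp only [Matrix.map_apply, Matrix.mul_apply]
  rw [substPow_sum p Finset.univ (fun l => M i l * N l j)]
  exact Finset.sum_congr rfl fun l _ => substPow_mul p hp _ _

end Helpers

lemma key_zero {K : Type*} [Field K] [CharZero K] (p : ℕ) (hp : 1 ≤ p) {n : ℕ}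
    (Cσ D : Matrix (Fin n) (Fin n) K⟦X⟧)
    (hD : D.map (fun g => d⁄dX K g) = ((p : K⟦X⟧) * X ^ (p - 1)) • (D * Cσ))
    (hD0 : D.map (fun g => constantCoeff g) = 0) : D = 0 := by
  have main : ∀ k, ∀ i j, coeff k (D i j) = 0 := by
    intro k
    induction k using Nat.strong_induction_on with
    | _ k ih =>
      intro i j
      match k with
      | 0 =>
        have h0 := congrFun (congrFun hD0 i) j
        simp only [Matrix.map_apply, Matrix.zero_apply] at h0
        simpa [coeff_zero_eq_constantCoeff] using h0
      | Nat.succ k =>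
        have hd := congrFun (congrFun hD i) j
        simp only [Matrix.map_apply, Matrix.smul_apply, smul_eq_mul] at hd
        have h1 : coeff k (d⁄dX K (D i j))
            = coeff k ((p : K⟦X⟧) * X ^ (p - 1) * ((D * Cσ) i j)) := by rw [hd]
        rw [coeff_derivative] at h1
        have h2 : coeff k ((p : K⟦X⟧) * X ^ (p - 1) * ((D * Cσ) i j)) = 0 := by
          rw [mul_assoc, natCast_eq_C, coeff_C_mul, coeff_X_pow_mul']
          split_ifs with hle
          · rw [Matrix.mul_apply, map_sum]
            have hz : ∀ l ∈ Finset.univ, coeff (k - (p - 1)) (D i l * Cσ l j) = 0 := by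
              intro l _
              rw [PowerSeries.coeff_mul]
              apply Finset.sum_eq_zero
              intro x hx
              rw [Finset.HasAntidiagonal.mem_antidiagonal] at hx
              have hx1 : x.1 < k + 1 := by omega
              rw [ih x.1 hx1 i l, zero_mul]
            rw [Finset.sum_congr rfl hz, Finset.sum_const_zero, mul_zero]
          · rw [mul_zero]
        rw [h2] at h1
        have hne : ((k : K) + 1) ≠ 0 := by
          have : ((k + 1 : ℕ) : K) ≠ 0 := Nat.cast_ne_zero.mpr (Nat.succ_ne_zero k)
          push_cast at this; exact this
        have := mul_eq_zero.mp h1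
        rcases this with h | h
        · exact h
        · exact absurd h hne
  refine Matrix.ext fun i j => PowerSeries.ext fun k => ?_
  simp [main k i j]

/-- The deformation-matrix identity `F(λ) = A(λ)⁻¹ F(0) A(λ^p)`:
if `A' = A·C` with `A(0) = I`, and the Frobenius matrix `F` satisfies
`F' + C·F = p·λ^{p-1}·F·C_σ` (where `σ` is the substitution `λ ↦ λ^p`
applied entrywise), then `F = A⁻¹·F₀·A_σ`, `F₀` being the constant-term
matrix of `F`. -/
theorem frobenius_matrix_eq {K : Type*} [Field K] [CharZero K]
    (p : ℕ) (hp : 1 ≤ p) {n : ℕ} (C A F : Matrix (Fin n) (Fin n) K⟦X⟧)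
    (hA : A.map (fun g => derivative K g) = A * C)
    (hA0 : A.map (fun g => constantCoeff g) = (1 : Matrix (Fin n) (Fin n) K))
    (hF : F.map (fun g => derivative K g) + C * F
      = ((p : K⟦X⟧) * X ^ (p - 1)) • (F * C.map (substPow p))) :
    F = A⁻¹ * F.map (fun g => PowerSeries.C (constantCoeff g))
          * A.map (substPow p) := by
  classical
  set F0 : Matrix (Fin n) (Fin n) K⟦X⟧ :=
    F.map (fun g => PowerSeries.C (constantCoeff g)) with hF0def
  set Aσ : Matrix (Fin n) (Fin n) K⟦X⟧ := A.map (substPow p) with hAσdef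
  set Cσ : Matrix (Fin n) (Fin n) K⟦X⟧ := C.map (substPow p) with hCσdef
  set s : K⟦X⟧ := (p : K⟦X⟧) * X ^ (p - 1) with hsdef
  have hF' : F.map (fun g => derivative K g) = s • (F * Cσ) - C * F :=
    eq_sub_of_add_eq hF
  have hAF : (A * F).map (fun g => derivative K g) = s • (A * F * Cσ) := by
    rw [matrix_map_derivative_mul, hA, hF', Matrix.mul_sub, Matrix.mul_smul,
      ← Matrix.mul_assoc A C F, ← Matrix.mul_assoc A F Cσ]
    abel
  have hF0A : (F0 * Aσ).map (fun g => derivative K g) = s • (F0 * Aσ * Cσ) := by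
    rw [matrix_map_derivative_mul]
    have h1 : F0.map (fun g => derivative K g) = 0 := by
      refine Matrix.ext fun i j => ?_
      simp [hF0def, Matrix.map_apply]
    have h2 : Aσ.map (fun g => derivative K g) = s • (Aσ * Cσ) := by
      have h3 : Aσ.map (fun g => derivative K g)
          = s • (A.map (fun g => derivative K g)).map (substPow p) := by
        refine Matrix.ext fun i j => ?_
        simp only [hAσdef, Matrix.map_apply, Matrix.smul_apply, smul_eq_mul, hsdef]
        rw [derivative_substPow p hp]
      rw [h3, hA, matrix_map_substPow_mul p hp, ← hAσdef, ← hCσdef]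
    rw [h1, h2, Matrix.zero_mul, zero_add, Matrix.mul_smul, Matrix.mul_assoc]
  set D : Matrix (Fin n) (Fin n) K⟦X⟧ := A * F - F0 * Aσ with hDdef
  have hDd : D.map (fun g => derivative K g) = s • (D * Cσ) := by
    have hsplit : D.map (fun g => derivative K g)
        = (A * F).map (fun g => derivative K g)
          - (F0 * Aσ).map (fun g => derivative K g) := by
      refine Matrix.ext fun i j => ?_
      simp [hDdef, Matrix.map_apply, Matrix.sub_apply]
    rw [hsplit, hAF, hF0A, ← smul_sub, ← Matrix.sub_mul]
  have hD0 : D.map (fun g => constantCoeff g) = 0 := by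
    have hrfl : D.map (fun g => constantCoeff g) = (constantCoeff (R := K)).mapMatrix D := rfl
    have hA0' : (constantCoeff (R := K)).mapMatrix A = 1 := hA0
    have hF0' : (constantCoeff (R := K)).mapMatrix F0 = (constantCoeff (R := K)).mapMatrix F := by
      refine Matrix.ext fun i j => ?_
      simp [hF0def, RingHom.mapMatrix_apply, Matrix.map_apply]
    have hAσ' : (constantCoeff (R := K)).mapMatrix Aσ = (constantCoeff (R := K)).mapMatrix A := by
      refine Matrix.ext fun i j => ?_
      simp [hAσdef, RingHom.mapMatrix_apply, Matrix.map_apply, constantCoeff_substPow]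
    rw [hrfl, hDdef, map_sub, map_mul, map_mul, hA0', hF0', hAσ', hA0',
      Matrix.one_mul, Matrix.mul_one, sub_self]
  have hDzero : D = 0 := key_zero p hp Cσ D hDd hD0
  have hAFeq : A * F = F0 * Aσ := sub_eq_zero.mp hDzero
  have hdet : IsUnit A.det := by
    rw [PowerSeries.isUnit_iff_constantCoeff]
    have h1 : constantCoeff A.det = ((constantCoeff (R := K)).mapMatrix A).det :=
      (constantCoeff (R := K)).map_det A
    have h2 : (constantCoeff (R := K)).mapMatrix A = 1 := hA0
    rw [h1, h2, Matrix.det_one]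
    exact isUnit_one
  calc F = A⁻¹ * (A * F) := by
        rw [← Matrix.mul_assoc, Matrix.nonsing_inv_mul A hdet, Matrix.one_mul]
    _ = A⁻¹ * F0 * Aσ := by rw [hAFeq, Matrix.mul_assoc]
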